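/- Let β ∈ ℂ, B(p) = X*p'' + β•p' on ℂ[X], q ∈ ℂ[X] with zero constant term, and P_n = e^{q(B)}(X^n). Then the lowering formula B(P_n) = n*(n-1+β) • P_{n-1} holds for all n ≥ 1. -/

import Mathlib

open Polynomial

/-- Multiplication by `X` as a linear endomorphism of `ℂ[X]`. -/
noncomputable def Mop : Module.End ℂ ℂ[X] := LinearMap.mulLeft ℂ (X : ℂ[X])

/-- The derivative as a linear endomorphism of `ℂ[X]`. -/
noncomputable def Dop : Module.End ℂ ℂ[X] := Polynomial.derivative

/-- `H = M ∘ D`, i.e. `x·d/dx`. -/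
noncomputable def Hop : Module.End ℂ ℂ[X] := Mop * Dop

/-- `B = M ∘ D ∘ D + β • D`, i.e. `B(p) = X·p'' + β·p'`. -/
noncomputable def Bop (β : ℂ) : Module.End ℂ ℂ[X] := Mop * Dop * Dop + β • Dop

/-- The locally finite exponential `e^A p = ∑ₘ Aᵐ p / m!` of a degree-lowering
operator `A` (the series terminates, so it may be truncated at `deg p`). -/
noncomputable def expOp (A : Module.End ℂ ℂ[X]) (p : ℂ[X]) : ℂ[X] :=
  ∑ m ∈ Finset.range (p.natDegree + 1), ((Nat.factorial m : ℂ))⁻¹ • (A ^ m) p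


lemma Bop_apply (β : ℂ) (p : ℂ[X]) :
    Bop β p = X * derivative (derivative p) + β • derivative p := by
  simp [Bop, Mop, Dop, LinearMap.mulLeft]

lemma Bop_natDegree_le (β : ℂ) (p : ℂ[X]) (k : ℕ) (h : p.natDegree ≤ k + 1) :
    (Bop β p).natDegree ≤ k := by
  rw [Bop_apply]
  apply Polynomial.natDegree_add_le_of_degree_le
  · rcases Nat.eq_zero_or_pos k with rfl | hk
    · have : derivative p = C ((derivative p).coeff 0) :=
        Polynomial.eq_C_of_natDegree_le_zero (by
          have := Polynomial.natDegree_derivative_le p; omega)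
      rw [this]
      simp
    · calc (X * derivative (derivative p)).natDegree
          ≤ 1 + (derivative (derivative p)).natDegree := by
            have := Polynomial.natDegree_mul_le (p := (X:ℂ[X])) (q := derivative (derivative p)); rwa [natDegree_X] at this
        _ ≤ k := by
            have h1 := Polynomial.natDegree_derivative_le p
            have h2 := Polynomial.natDegree_derivative_le (derivative p)
            omega
  · calc (β • derivative p).natDegree ≤ (derivative p).natDegree :=
        Polynomial.natDegree_smul_le _ _
      _ ≤ k := by have := Polynomial.natDegree_derivative_le p; omega

lemma Bop_pow_eq_zero (β : ℂ) (p : ℂ[X]) (k : ℕ) (h : p.natDegree ≤ k) :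
    ((Bop β) ^ (k + 1)) p = 0 := by
  induction k generalizing p with
  | zero =>
    have hp : p = C (p.coeff 0) := Polynomial.eq_C_of_natDegree_le_zero h
    rw [pow_one, Bop_apply, hp]
    simp
  | succ k ih =>
    rw [pow_succ, Module.End.mul_apply]
    exact ih _ (Bop_natDegree_le β p k h)

lemma commute_aeval (β : ℂ) (r : ℂ[X]) : Commute (Bop β) (aeval (Bop β) r) := by
  have := (Commute.all X r).map (aeval (Bop β) : ℂ[X] →ₐ[ℂ] Module.End ℂ ℂ[X])
  simpa using this

lemma aeval_pow_eq_zero (β : ℂ) (q : ℂ[X]) (hq : q.coeff 0 = 0) (p : ℂ[X]) (m : ℕ)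
    (h : p.natDegree < m) : ((aeval (Bop β) q) ^ m) p = 0 := by
  have hqX : q = q.divX * X := by
    conv_lhs => rw [← Polynomial.divX_mul_X_add q, hq]
    simp
  have hA : aeval (Bop β) q = aeval (Bop β) q.divX * Bop β := by
    conv_lhs => rw [hqX]; simp
  rw [hA, (Commute.symm (commute_aeval β q.divX)).mul_pow, Module.End.mul_apply]
  obtain ⟨j, rfl⟩ := Nat.exists_eq_add_of_le h
  have : ((Bop β) ^ (p.natDegree + 1 + j)) p = 0 := by
    rw [show p.natDegree + 1 + j = j + (p.natDegree + 1) by ring, pow_add (Bop β),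
      Module.End.mul_apply, Bop_pow_eq_zero β p p.natDegree le_rfl]
    simp
  rw [this]
  simp

lemma Bop_X_pow (β : ℂ) (n : ℕ) (hn : 1 ≤ n) :
    Bop β ((X : ℂ[X]) ^ n) = ((n : ℂ) * ((n : ℂ) - 1 + β)) • X ^ (n - 1) := by
  rw [Bop_apply]
  match n, hn with
  | 1, _ => simp [smul_smul]
  | (k+2), _ =>
    rw [Polynomial.derivative_X_pow, Polynomial.derivative_C_mul,
      Polynomial.derivative_X_pow]
    push_cast
    simp only [Nat.add_sub_cancel, Polynomial.smul_eq_C_mul]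
    rw [show (X:ℂ[X]) * (C ((k:ℂ)+2) * (C ((k:ℂ)+1) * X ^ k)) = C ((k:ℂ)+2) * C ((k:ℂ)+1) * X^(k+1) by ring]
    rw [show C β * (C ((k:ℂ)+2) * X^(k+1)) = C (β*((k:ℂ)+2)) * X^(k+1) by
      rw [C_mul]; ring]
    rw [← add_mul, ← C_mul, ← C_add,
      show ((k:ℂ)+2)*((k:ℂ)+1) + β*((k:ℂ)+2) = ((k:ℂ)+2)*((k:ℂ)+2-1+β) by ring]

theorem stmt14 (β : ℂ) (q : ℂ[X]) (hq : q.coeff 0 = 0) (n : ℕ) (hn : 1 ≤ n) :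
    Bop β (expOp (aeval (Bop β) q) (X ^ n))
      = ((n : ℂ) * ((n : ℂ) - 1 + β)) • expOp (aeval (Bop β) q) (X ^ (n - 1)) := by
  have hc := commute_aeval β q
  set A := aeval (Bop β) q with hA
  have key : ∀ m : ℕ, Bop β ((A ^ m) (X ^ n)) =
      ((n:ℂ) * ((n:ℂ) - 1 + β)) • (A ^ m) (X ^ (n-1)) := by
    intro m
    have h1 : Bop β ((A ^ m) (X ^ n)) = (A ^ m) (Bop β (X ^ n)) := by
      calc Bop β ((A^m) (X^n)) = (Bop β * A^m) (X^n) := rfl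
        _ = (A^m * Bop β) (X^n) := by rw [(hc.pow_right m).eq]
        _ = (A^m) (Bop β (X^n)) := rfl
    rw [h1, Bop_X_pow β n hn, map_smul]
  unfold expOp
  rw [natDegree_X_pow, natDegree_X_pow, show n - 1 + 1 = n by omega, map_sum]
  simp only [map_smul, key]
  rw [Finset.sum_range_succ]
  have hz : (A ^ n) ((X:ℂ[X]) ^ (n-1)) = 0 :=
    aeval_pow_eq_zero β q hq _ n (by rw [natDegree_X_pow]; omega)
  rw [hz]
  rw [Finset.smul_sum]
  simp only [smul_zero, add_zero]
  exact Finset.sum_congr rfl fun m _ => smul_comm _ _ _
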